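/- Let t and w be nonnegative Hermitian sesquilinear forms on a complex vector space D. If t is w-almost dominated (i.e., there exist nonnegative Hermitian forms tₙ with tₙ ≤ tₙ₊₁ ≤ t, tₙ ≤ αₙ w for some αₙ ≥ 0, and tₙ(x,x) → t(x,x) for all x), then t is w-closable: for every sequence (xₙ) in D with w(xₙ,xₙ) → 0 and t(xₙ−xₘ, xₙ−xₘ) → 0 one has t(xₙ,xₙ) → 0. -/

import Mathlib

open Filter


lemma sqrt_tri {D : Type*} [AddCommGroup D] [Module ℂ D]
    (s : D →ₗ⋆[ℂ] D →ₗ[ℂ] ℂ)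
    (hherm : ∀ x y : D, s x y = star (s y x)) (hpos : ∀ x : D, 0 ≤ (s x x).re)
    (x y : D) :
    Real.sqrt ((s (x + y) (x + y)).re) ≤
      Real.sqrt ((s x x).re) + Real.sqrt ((s y y).re) := by
  set a := (s x x).re with ha
  set c := (s y y).re with hc
  set b := (s x y).re with hb
  have hre : ∀ u v : D, ((s u) v + (s v) u).re = 2 * ((s u) v).re := by
    intro u v
    rw [hherm v u]
    simp [Complex.add_re]
    ring
  have hsmul : ∀ r : ℝ, ∀ z : D, s ((r:ℂ) • z) = (r:ℂ) • s z := by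
    intro r z
    rw [map_smulₛₗ]
    simp
  have key : ∀ r : ℝ, 0 ≤ c * (r * r) + (2 * b) * r + a := by
    intro r
    have h0 := hpos (x + (r : ℂ) • y)
    have hexp : ((s (x + (r:ℂ)•y)) (x + (r:ℂ)•y)).re = a + 2*b*r + c*(r*r) := by
      have e1 : (s (x + (r:ℂ)•y)) (x + (r:ℂ)•y)
          = s x x + (r:ℂ) * (s x y + s y x) + (r:ℂ) * ((r:ℂ) * s y y) := by
        rw [map_add s x ((r:ℂ)•y), hsmul r y]
        simp [map_add, LinearMap.add_apply, LinearMap.smul_apply, smul_eq_mul]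
        ring
      rw [e1]
      have h2 : ((r:ℂ) * (s x y + s y x)).re = r * (2 * b) := by
        rw [Complex.re_ofReal_mul, hre x y]
      have h3 : ((r:ℂ) * ((r:ℂ) * (s y y))).re = r * (r * c) := by
        rw [Complex.re_ofReal_mul, Complex.re_ofReal_mul]
      rw [Complex.add_re, Complex.add_re, h2, h3]
      ring
    rw [hexp] at h0
    linarith
  have hdisc : discrim c (2*b) a ≤ 0 := discrim_le_zero key
  have hb2 : b^2 ≤ a * c := by
    unfold discrim at hdisc; nlinarith
  have hble : b ≤ Real.sqrt a * Real.sqrt c := by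
    calc b ≤ |b| := le_abs_self b
    _ = Real.sqrt (b^2) := (Real.sqrt_sq_eq_abs b).symm
    _ ≤ Real.sqrt (a * c) := Real.sqrt_le_sqrt hb2
    _ = Real.sqrt a * Real.sqrt c := Real.sqrt_mul (hpos x) _
  have hsum : ((s (x+y)) (x+y)).re = a + 2*b + c := by
    have e : (s (x+y)) (x+y) = s x x + (s x y + s y x) + s y y := by
      rw [map_add]
      simp [map_add, LinearMap.add_apply]
      ring
    rw [e, Complex.add_re, Complex.add_re, hre x y]
  rw [hsum]
  have h1 : a + 2*b + c ≤ (Real.sqrt a + Real.sqrt c)^2 := by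
    have hsa := Real.sq_sqrt (hpos x)
    have hsc := Real.sq_sqrt (hpos y)
    nlinarith
  calc Real.sqrt (a + 2*b + c) ≤ Real.sqrt ((Real.sqrt a + Real.sqrt c)^2) :=
        Real.sqrt_le_sqrt h1
    _ = Real.sqrt a + Real.sqrt c := Real.sqrt_sq (by positivity)


/-- **Almost dominated forms are closable** (Section 8.2; cf. Theorem 5.1). Let `t`, `w` be
nonnegative Hermitian sesquilinear forms on a complex vector space `D` (conjugate-linear in
the first variable). If `t` is `w`-almost dominated, i.e. there are nonnegative Hermitian
forms `tₙ` with `tₙ ≤ tₙ₊₁ ≤ t`, `tₙ ≤ αₙ w` for some `αₙ ≥ 0`, and `tₙ(x,x) → t(x,x)` for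
every `x`, then `t` is `w`-closable: `w(xₙ,xₙ) → 0` and `t(xₙ−xₘ, xₙ−xₘ) → 0` imply
`t(xₙ,xₙ) → 0`. -/
theorem stmt_17 {D : Type*} [AddCommGroup D] [Module ℂ D]
    (t w : D →ₗ⋆[ℂ] D →ₗ[ℂ] ℂ)
    (ht_herm : ∀ x y : D, t x y = star (t y x)) (ht_pos : ∀ x : D, 0 ≤ (t x x).re)
    (hw_herm : ∀ x y : D, w x y = star (w y x)) (hw_pos : ∀ x : D, 0 ≤ (w x x).re)
    (tn : ℕ → D →ₗ⋆[ℂ] D →ₗ[ℂ] ℂ) (α : ℕ → ℝ)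
    (htn_herm : ∀ n, ∀ x y : D, tn n x y = star (tn n y x))
    (htn_pos : ∀ n, ∀ x : D, 0 ≤ (tn n x x).re)
    (hα : ∀ n, 0 ≤ α n)
    (hmono : ∀ n, ∀ x : D, (tn n x x).re ≤ (tn (n + 1) x x).re)
    (hle_t : ∀ n, ∀ x : D, (tn n x x).re ≤ (t x x).re)
    (hdom : ∀ n, ∀ x : D, (tn n x x).re ≤ α n * (w x x).re)
    (hlim : ∀ x : D, Tendsto (fun n => (tn n x x).re) atTop (nhds ((t x x).re))) :
    ∀ x : ℕ → D,
      Tendsto (fun n => (w (x n) (x n)).re) atTop (nhds 0) →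
      (∀ ε > (0 : ℝ), ∃ N : ℕ, ∀ n ≥ N, ∀ m ≥ N,
        (t (x n - x m) (x n - x m)).re < ε) →
      Tendsto (fun n => (t (x n) (x n)).re) atTop (nhds 0) := by
  intro x hw hcauchy
  rw [Metric.tendsto_atTop]
  intro ε hε
  obtain ⟨N, hN⟩ := hcauchy (ε/2) (by linarith)
  refine ⟨N, fun n hn => ?_⟩
  have hkey : (t (x n) (x n)).re ≤ ε/2 := by
    have hk : ∀ k, (tn k (x n) (x n)).re ≤ ε/2 := by
      intro k
      set L := Real.sqrt ((tn k (x n) (x n)).re) with hL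
      have hLle : L ≤ Real.sqrt (ε/2) := by
        have htend : Tendsto
            (fun m => Real.sqrt (ε/2) + Real.sqrt (α k) * Real.sqrt ((w (x m) (x m)).re))
            atTop (nhds (Real.sqrt (ε/2))) := by
          have h1 : Tendsto (fun m => Real.sqrt ((w (x m) (x m)).re)) atTop (nhds 0) := by
            have := (Real.continuous_sqrt.tendsto 0).comp hw
            simpa [Function.comp_def] using this
          have h2 : Tendsto
              (fun m => Real.sqrt (ε/2) + Real.sqrt (α k) * Real.sqrt ((w (x m) (x m)).re))
              atTop (nhds (Real.sqrt (ε/2) + Real.sqrt (α k) * 0)) :=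
            Tendsto.const_add _ (h1.const_mul _)
          simpa using h2
        refine ge_of_tendsto htend ?_
        filter_upwards [eventually_ge_atTop N] with m hm
        have step1 : L ≤ Real.sqrt ((tn k (x n - x m) (x n - x m)).re)
            + Real.sqrt ((tn k (x m) (x m)).re) := by
          have := sqrt_tri (tn k) (htn_herm k) (htn_pos k) (x n - x m) (x m)
          simpa using this
        have step2 : Real.sqrt ((tn k (x n - x m) (x n - x m)).re) ≤ Real.sqrt (ε/2) := by
          apply Real.sqrt_le_sqrt
          exact le_of_lt (lt_of_le_of_lt (hle_t k _) (hN n hn m hm))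
        have step3 : Real.sqrt ((tn k (x m) (x m)).re)
            ≤ Real.sqrt (α k) * Real.sqrt ((w (x m) (x m)).re) := by
          rw [← Real.sqrt_mul (hα k)]
          exact Real.sqrt_le_sqrt (hdom k _)
        linarith
      have hsq := pow_le_pow_left₀ (Real.sqrt_nonneg _) hLle 2
      rw [Real.sq_sqrt (htn_pos k _), Real.sq_sqrt (by linarith : (0:ℝ) ≤ ε/2)] at hsq
      exact hsq
    exact le_of_tendsto (hlim (x n)) (Eventually.of_forall hk)
  rw [Real.dist_eq, sub_zero, abs_of_nonneg (ht_pos _)]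
  linarith
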